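/- Let G be a finite simple graph on vertex set {1,…,m} with maximum degree d_max, let each f_i : ℝ^d → ℝ be differentiable with L-Lipschitz gradient, and μ_z > 0. Let x_i^t ∈ ℝ^d, set z_{ij}^t := (x_i^t + x_j^t)/2, let y_{ij,i}^t ∈ ℝ^d be given, φ_i^t := Σ_{j∈N_i} y_{ij,i}^t, and for arbitrary points x̂_i^{t+1} ∈ ℝ^d set ê_i^{t+1} := ∇f_i(x̂_i^{t+1}) + Σ_{j∈N_i}(y_{ij,i}^t + μ_z(x̂_i^{t+1} − z_{ij}^t)). Define V^t := Σ_i ‖∇f_i(x_i^t) + φ_i^t‖² + (1/4) Σ_i Σ_{j∈N_i} ‖x_i^t − x_j^t‖². Then V^t ≤ 4 Σ_i ‖ê_i^{t+1}‖² + (2L² + 8μ_z² d_max²) Σ_i ‖x̂_i^{t+1} − x_i^t‖² + (8μ_z² d_max + 1) Σ_i Σ_{j∈N_i} ‖x_i^t − z_{ij}^t‖². -/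
import Mathlib

open Finset

/-- Bound on the Lyapunov function:
`Vᵗ ≤ 4 Σᵢ ‖ê_i^{t+1}‖² + (2L² + 8μ_z² d_max²) Σᵢ ‖x̂_i^{t+1} − x_iᵗ‖²
   + (8μ_z² d_max + 1) Σᵢ Σ_{j∈Nᵢ} ‖x_iᵗ − z_{ij}ᵗ‖²`. -/
theorem stmt_13 (m d : ℕ) (G : SimpleGraph (Fin m)) [DecidableRel G.Adj]
    (f : Fin m → EuclideanSpace ℝ (Fin d) → ℝ)
    (hf : ∀ i, Differentiable ℝ (f i))
    (L : ℝ) (hL : 0 ≤ L)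
    (hlip : ∀ i a b, ‖gradient (f i) a - gradient (f i) b‖ ≤ L * ‖a - b‖)
    (μz : ℝ) (hμz : 0 < μz)
    (xt xhat1 : Fin m → EuclideanSpace ℝ (Fin d))
    (zt : Fin m → Fin m → EuclideanSpace ℝ (Fin d))
    (hzt : ∀ i j, zt i j = (1 / 2 : ℝ) • (xt i + xt j))
    (yt : Fin m → Fin m → EuclideanSpace ℝ (Fin d))
    (φt : Fin m → EuclideanSpace ℝ (Fin d))
    (hφt : ∀ i, φt i = ∑ j ∈ G.neighborFinset i, yt i j)
    (ehat1 : Fin m → EuclideanSpace ℝ (Fin d))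
    (hehat1 : ∀ i, ehat1 i
      = gradient (f i) (xhat1 i)
        + ∑ j ∈ G.neighborFinset i, (yt i j + μz • (xhat1 i - zt i j)))
    (V : ℝ)
    (hV : V = ∑ i, ‖gradient (f i) (xt i) + φt i‖ ^ 2
        + (1 / 4) * ∑ i, ∑ j ∈ G.neighborFinset i, ‖xt i - xt j‖ ^ 2) :
    V ≤ 4 * ∑ i, ‖ehat1 i‖ ^ 2
        + (2 * L ^ 2 + 8 * μz ^ 2 * (G.maxDegree : ℝ) ^ 2)
            * ∑ i, ‖xhat1 i - xt i‖ ^ 2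
        + (8 * μz ^ 2 * (G.maxDegree : ℝ) + 1)
            * ∑ i, ∑ j ∈ G.neighborFinset i, ‖xt i - zt i j‖ ^ 2 := by
  set D : ℝ := (G.maxDegree : ℝ) with hD
  have hD0 : 0 ≤ D := Nat.cast_nonneg _
  -- the (1/4) term equals ∑∑‖x−z‖²
  have hquart : ∀ i j, j ∈ G.neighborFinset i → ‖xt i - xt j‖ ^ 2 = 4 * ‖xt i - zt i j‖ ^ 2 := by
    intro i j _
    have : xt i - zt i j = (1 / 2 : ℝ) • (xt i - xt j) := by
      rw [hzt i j]; module
    rw [this, norm_smul]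
    simp [mul_pow]
    ring
  have key : ∀ i, ‖gradient (f i) (xt i) + φt i‖ ^ 2
      ≤ 4 * ‖ehat1 i‖ ^ 2 + (2 * L ^ 2 + 8 * μz ^ 2 * D ^ 2) * ‖xhat1 i - xt i‖ ^ 2
        + 8 * μz ^ 2 * D * ∑ j ∈ G.neighborFinset i, ‖xt i - zt i j‖ ^ 2 := by
    intro i
    set N := G.neighborFinset i with hN
    set Δ := xhat1 i - xt i with hΔ
    set S : EuclideanSpace ℝ (Fin d) := ∑ j ∈ N, (xt i - zt i j) with hS
    have hsum : ∑ j ∈ N, (xhat1 i - zt i j) = (N.card : ℝ) • Δ + S := by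
      have : ∀ j ∈ N, xhat1 i - zt i j = Δ + (xt i - zt i j) := by
        intro j _; rw [hΔ]; abel
      rw [Finset.sum_congr rfl this, Finset.sum_add_distrib, Finset.sum_const,
        Nat.cast_smul_eq_nsmul ℝ]
    have hg : gradient (f i) (xt i) + φt i
        = ehat1 i - (gradient (f i) (xhat1 i) - gradient (f i) (xt i))
          - (μz * (N.card : ℝ)) • Δ - μz • S := by
      rw [hehat1 i, hφt i, Finset.sum_add_distrib, ← Finset.smul_sum, hsum]
      rw [smul_add, smul_smul]
      abel
    have hnorm : ‖gradient (f i) (xt i) + φt i‖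
        ≤ ‖ehat1 i‖ + L * ‖Δ‖ + μz * D * ‖Δ‖ + μz * ‖S‖ := by
      rw [hg]
      have h1 := norm_sub_le (ehat1 i - (gradient (f i) (xhat1 i) - gradient (f i) (xt i))
          - (μz * (N.card : ℝ)) • Δ) (μz • S)
      have h2 := norm_sub_le (ehat1 i - (gradient (f i) (xhat1 i) - gradient (f i) (xt i)))
          ((μz * (N.card : ℝ)) • Δ)
      have h3 := norm_sub_le (ehat1 i) (gradient (f i) (xhat1 i) - gradient (f i) (xt i))
      have hb : ‖gradient (f i) (xhat1 i) - gradient (f i) (xt i)‖ ≤ L * ‖Δ‖ := hlip i _ _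
      have hcard : (N.card : ℝ) ≤ D := by
        rw [hD]
        exact_mod_cast G.degree_le_maxDegree i
      have hc : ‖(μz * (N.card : ℝ)) • Δ‖ ≤ μz * D * ‖Δ‖ := by
        rw [norm_smul]
        have : |μz * (N.card : ℝ)| = μz * (N.card : ℝ) := by
          rw [abs_of_nonneg]; positivity
        rw [Real.norm_eq_abs, this]
        have h := mul_le_mul_of_nonneg_right
          (mul_le_mul_of_nonneg_left hcard hμz.le) (norm_nonneg Δ)
        linarith
      have he : ‖μz • S‖ = μz * ‖S‖ := by
        rw [norm_smul, Real.norm_eq_abs, abs_of_pos hμz]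
      calc _ ≤ _ := h1
        _ ≤ _ := by rw [he]; linarith
    have hS2 : ‖S‖ ^ 2 ≤ D * ∑ j ∈ N, ‖xt i - zt i j‖ ^ 2 := by
      have h1 : ‖S‖ ≤ ∑ j ∈ N, ‖xt i - zt i j‖ := norm_sum_le _ _
      have h2 : (∑ j ∈ N, ‖xt i - zt i j‖) ^ 2 ≤ (N.card : ℝ) * ∑ j ∈ N, ‖xt i - zt i j‖ ^ 2 :=
        sq_sum_le_card_mul_sum_sq
      have hcard : (N.card : ℝ) ≤ D := by
        rw [hD]; exact_mod_cast G.degree_le_maxDegree i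
      have hsumnn : 0 ≤ ∑ j ∈ N, ‖xt i - zt i j‖ ^ 2 :=
        Finset.sum_nonneg fun j _ => sq_nonneg _
      have h3 : ‖S‖ ^ 2 ≤ (∑ j ∈ N, ‖xt i - zt i j‖) ^ 2 :=
        pow_le_pow_left₀ (norm_nonneg _) h1 2
      nlinarith
    have hsq : ‖gradient (f i) (xt i) + φt i‖ ^ 2
        ≤ (‖ehat1 i‖ + L * ‖Δ‖ + μz * D * ‖Δ‖ + μz * ‖S‖) ^ 2 :=
      pow_le_pow_left₀ (norm_nonneg _) hnorm 2
    have halg : ∀ a b c e : ℝ, (a + b + c + e) ^ 2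
        ≤ 4 * a ^ 2 + 2 * b ^ 2 + 8 * c ^ 2 + 8 * e ^ 2 := fun a b c e => by
      nlinarith [sq_nonneg (b - (a + c + e)), sq_nonneg (a - (c + e)), sq_nonneg (c - e)]
    have hfin := halg ‖ehat1 i‖ (L * ‖Δ‖) (μz * D * ‖Δ‖) (μz * ‖S‖)
    have h5 : μz ^ 2 * ‖S‖ ^ 2 ≤ μz ^ 2 * (D * ∑ j ∈ N, ‖xt i - zt i j‖ ^ 2) :=
      mul_le_mul_of_nonneg_left hS2 (sq_nonneg μz)
    have e1 : 2 * (L * ‖Δ‖) ^ 2 + 8 * (μz * D * ‖Δ‖) ^ 2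
        = (2 * L ^ 2 + 8 * μz ^ 2 * D ^ 2) * ‖Δ‖ ^ 2 := by ring
    have e2 : 8 * (μz * ‖S‖) ^ 2 = 8 * (μz ^ 2 * ‖S‖ ^ 2) := by ring
    have e3 : 8 * (μz ^ 2 * (D * ∑ j ∈ N, ‖xt i - zt i j‖ ^ 2))
        = 8 * μz ^ 2 * D * ∑ j ∈ N, ‖xt i - zt i j‖ ^ 2 := by ring
    linarith
  have hVeq : V = ∑ i, ‖gradient (f i) (xt i) + φt i‖ ^ 2
      + ∑ i, ∑ j ∈ G.neighborFinset i, ‖xt i - zt i j‖ ^ 2 := by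
    rw [hV]
    congr 1
    rw [Finset.mul_sum]
    refine Finset.sum_congr rfl fun i _ => ?_
    rw [Finset.mul_sum]
    refine Finset.sum_congr rfl fun j hj => ?_
    rw [hquart i j hj]; ring
  rw [hVeq]
  have hsum := Finset.sum_le_sum (s := Finset.univ) fun i _ => key i
  simp only [Finset.sum_add_distrib, ← Finset.mul_sum] at hsum
  have hr : (8 * μz ^ 2 * D + 1) * ∑ i, ∑ j ∈ G.neighborFinset i, ‖xt i - zt i j‖ ^ 2
      = 8 * μz ^ 2 * D * (∑ i, ∑ j ∈ G.neighborFinset i, ‖xt i - zt i j‖ ^ 2)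
        + ∑ i, ∑ j ∈ G.neighborFinset i, ‖xt i - zt i j‖ ^ 2 := by ring
  linarith
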